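/- Let (X, φ, ⟨⟨·,·⟩⟩) be a Hilbert A-bimodule over a C*-algebra A. Then J_X = I_X, where J_X = φ⁻¹(K(X)) ∩ (ker φ)^⊥ and I_X is the closed linear span of {⟨⟨ξ,η⟩⟩ : ξ,η ∈ X}. -/

import Mathlib

open scoped RightActions

/-- The December 2024 Mathlib notion of a (right) Hilbert C⋆-module, `RightCStarModule`, with the
right action given by `SMul Aᵐᵒᵖ E`; Mathlib's `RightCStarModule` now denotes left modules. -/
class RightCStarModule (A E : Type*) [NonUnitalSemiring A] [StarRing A]
    [Module ℂ A] [AddCommGroup E] [Module ℂ E] [PartialOrder A] [SMul Aᵐᵒᵖ E] [Norm A] [Norm E]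
    extends Inner A E where
  inner_add_right {x} {y} {z} : inner x (y + z) = inner x y + inner x z
  inner_self_nonneg {x} : 0 ≤ inner x x
  inner_self {x} : inner x x = 0 ↔ x = 0
  inner_op_smul_right {a : A} {x y : E} : inner x (y <• a) = inner x y * a
  inner_smul_right_complex {z : ℂ} {x} {y} : inner x (z • y) = z • inner x y
  star_inner x y : star (inner x y) = inner y x
  norm_eq_sqrt_norm_inner_self x : ‖x‖ = Real.sqrt ‖inner x x‖


set_option linter.unusedSectionVars false
set_option maxHeartbeats 1000000

variable {A X : Type*} [NonUnitalCStarAlgebra A] [PartialOrder A] [StarOrderedRing A]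
  [NormedAddCommGroup X] [NormedSpace ℂ X] [SMul Aᵐᵒᵖ X] [RightCStarModule A X] [CompleteSpace X]

/-- `K(X)`: the closed linear span in `B(X)` of the rank-one operators
`θ_{ξ,η} : ζ ↦ ξ • ⟪η, ζ⟫`. -/
def compactOps (A X : Type*) [NonUnitalCStarAlgebra A] [PartialOrder A] [StarOrderedRing A]
    [NormedAddCommGroup X] [NormedSpace ℂ X] [SMul Aᵐᵒᵖ X] [RightCStarModule A X]
    [CompleteSpace X] : Set (X →L[ℂ] X) :=
  closure (Submodule.span ℂ
    {T : X →L[ℂ] X | ∃ ξ η : X, ∀ ζ : X, T ζ = ξ <• (inner A η ζ : A)} : Set (X →L[ℂ] X))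

/-- The ideal `J_X = φ⁻¹(K(X)) ∩ (ker φ)^⊥` of Katsura, as a subset of `A`. -/
def KatsuraIdeal (φ : A →ₙₐ[ℂ] (X →L[ℂ] X)) : Set A :=
  {a : A | φ a ∈ compactOps A X} ∩ {a : A | ∀ b : A, φ b = 0 → a * b = 0}


namespace RightCStarModule

variable {A E : Type*} [NonUnitalCStarAlgebra A] [PartialOrder A] [StarOrderedRing A]
  [NormedAddCommGroup E] [NormedSpace ℂ E] [SMul Aᵐᵒᵖ E] [RightCStarModule A E]

local notation "⟪" x ", " y "⟫" => inner A x y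

lemma inner_add_left {x y z : E} : ⟪x + y, z⟫ = ⟪x, z⟫ + ⟪y, z⟫ := by
  rw [← star_inner (A := A) z (x + y), inner_add_right, star_add, star_inner, star_inner]

lemma inner_op_smul_left {a : A} {x y : E} : ⟪x <• a, y⟫ = star a * ⟪x, y⟫ := by
  rw [← star_inner (A := A) y, inner_op_smul_right, star_mul, star_inner]

lemma inner_smul_left_complex {z : ℂ} {x y : E} : ⟪z • x, y⟫ = star z • ⟪x, y⟫ := by
  rw [← star_inner (A := A) y, inner_smul_right_complex, star_smul, star_inner]

lemma inner_smul_right_real {z : ℝ} {x y : E} : ⟪x, z • y⟫ = z • ⟪x, y⟫ := by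
  have h₁ : z • y = (z : ℂ) • y := (Complex.coe_smul z y).symm
  rw [h₁, inner_smul_right_complex, Complex.coe_smul]

lemma inner_smul_left_real {z : ℝ} {x y : E} : ⟪z • x, y⟫ = z • ⟪x, y⟫ := by
  rw [← star_inner (A := A) y, inner_smul_right_real, star_smul, star_inner, star_trivial]

lemma inner_zero_right {x : E} : ⟪x, 0⟫ = 0 := by
  have h : (0 : E) = (0 : ℂ) • (0 : E) := (zero_smul ℂ _).symm
  rw [h, inner_smul_right_complex, zero_smul]

lemma inner_zero_left {x : E} : ⟪0, x⟫ = 0 := by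
  rw [← star_inner (A := A) x, inner_zero_right, star_zero]

lemma inner_neg_right {x y : E} : ⟪x, -y⟫ = -⟪x, y⟫ := by
  rw [← neg_one_smul ℂ y, inner_smul_right_complex, neg_one_smul]

lemma inner_neg_left {x y : E} : ⟪-x, y⟫ = -⟪x, y⟫ := by
  rw [← star_inner (A := A) y, inner_neg_right, star_neg, star_inner]

lemma inner_sub_right {x y z : E} : ⟪x, y - z⟫ = ⟪x, y⟫ - ⟪x, z⟫ := by
  rw [sub_eq_add_neg, inner_add_right, inner_neg_right, ← sub_eq_add_neg]

lemma inner_sub_left {x y z : E} : ⟪x - y, z⟫ = ⟪x, z⟫ - ⟪y, z⟫ := by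
  rw [sub_eq_add_neg, inner_add_left, inner_neg_left, ← sub_eq_add_neg]

lemma norm_sq_eq {x : E} : ‖x‖ ^ 2 = ‖⟪x, x⟫‖ := by
  rw [norm_eq_sqrt_norm_inner_self (A := A) x, Real.sq_sqrt (norm_nonneg _)]

lemma inner_mul_inner_swap_le {x y : E} : ⟪y, x⟫ * ⟪x, y⟫ ≤ ‖x‖ ^ 2 • ⟪y, y⟫ := by
  rcases eq_or_ne x 0 with h | h
  · simp [h, inner_zero_left, inner_zero_right]
  · have h₁ : ∀ (a : A),
        (0 : A) ≤ ‖x‖ ^ 2 • (star a * a) - ‖x‖ ^ 2 • (star a * ⟪x, y⟫)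
                  - ‖x‖ ^ 2 • (⟪y, x⟫ * a) + ‖x‖ ^ 2 • (‖x‖ ^ 2 • ⟪y, y⟫) := fun a => by
      calc
            (0 : A) ≤ ⟪x <• a - ‖x‖ ^ 2 • y, x <• a - ‖x‖ ^ 2 • y⟫ := inner_self_nonneg
            _ = star a * (⟪x, x⟫ * a) - ‖x‖ ^ 2 • (star a * ⟪x, y⟫)
                  - ‖x‖ ^ 2 • (⟪y, x⟫ * a) + ‖x‖ ^ 2 • (‖x‖ ^ 2 • ⟪y, y⟫) := by
                      simp only [inner_sub_right, inner_op_smul_right, inner_sub_left,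
                        inner_op_smul_left, inner_smul_left_real, inner_smul_right_real,
                        smul_sub, sub_mul, mul_sub, smul_mul_assoc, mul_smul_comm, mul_assoc]
                      abel
            _ ≤ ‖x‖ ^ 2 • (star a * a) - ‖x‖ ^ 2 • (star a * ⟪x, y⟫)
                  - ‖x‖ ^ 2 • (⟪y, x⟫ * a) + ‖x‖ ^ 2 • (‖x‖ ^ 2 • ⟪y, y⟫) := by
                      gcongr
                      calc
                        star a * (⟪x, x⟫ * a) = star a * ⟪x, x⟫ * a := (mul_assoc _ _ _).symm
                        _ ≤ ‖⟪x, x⟫‖ • (star a * a) :=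
                          CStarAlgebra.star_left_conjugate_le_norm_smul (star_inner (A := A) x x)
                        _ = ‖x‖ ^ 2 • (star a * a) := by rw [norm_sq_eq (A := A) (x := x)]
    specialize h₁ ⟪x, y⟫
    simp only [star_inner, sub_self, zero_sub, le_neg_add_iff_add_le, add_zero] at h₁
    rwa [smul_le_smul_iff_of_pos_left (pow_pos (norm_pos_iff.mpr h) _)] at h₁

variable (E) in
lemma norm_inner_le {x y : E} : ‖⟪x, y⟫‖ ≤ ‖x‖ * ‖y‖ := by
  have := calc ‖⟪x, y⟫‖ ^ 2 = ‖⟪y, x⟫ * ⟪x, y⟫‖ := by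
                rw [← star_inner (A := A) x y, CStarRing.norm_star_mul_self, pow_two]
    _ ≤ ‖‖x‖ ^ 2 • ⟪y, y⟫‖ := by
                refine CStarAlgebra.norm_le_norm_of_nonneg_of_le ?_ inner_mul_inner_swap_le
                rw [← star_inner (A := A) x y]
                exact star_mul_self_nonneg _
    _ = ‖x‖ ^ 2 * ‖⟪y, y⟫‖ := by rw [norm_smul, Real.norm_of_nonneg (by positivity)]
    _ = ‖x‖ ^ 2 * ‖y‖ ^ 2 := by rw [← norm_sq_eq (A := A) (x := y)]
    _ = (‖x‖ * ‖y‖) ^ 2 := by ring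
  exact (pow_le_pow_iff_left₀ (norm_nonneg _) (by positivity) (by norm_num)).mp this

end RightCStarModule

section Aux


local notation "⟪" x ", " y "⟫" => inner A x y

lemma my_norm_op_smul_le (x : X) (a : A) : ‖x <• a‖ ≤ ‖x‖ * ‖a‖ := by
  have h1 : ‖x <• a‖ ^ 2 = ‖⟪x <• a, x <• a⟫‖ := RightCStarModule.norm_sq_eq
  have h2 : ⟪x <• a, x <• a⟫ = star a * (⟪x, x⟫ * a) := by
    rw [RightCStarModule.inner_op_smul_left, RightCStarModule.inner_op_smul_right]
  have h3 : ‖star a * (⟪x, x⟫ * a)‖ ≤ ‖a‖ * (‖x‖ ^ 2 * ‖a‖) := by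
    calc ‖star a * (⟪x, x⟫ * a)‖ ≤ ‖star a‖ * ‖⟪x, x⟫ * a‖ := norm_mul_le _ _
    _ ≤ ‖star a‖ * (‖⟪x, x⟫‖ * ‖a‖) := by gcongr; exact norm_mul_le _ _
    _ = ‖a‖ * (‖x‖ ^ 2 * ‖a‖) := by rw [norm_star, RightCStarModule.norm_sq_eq (A := A)]
  have h4 : ‖x <• a‖ ^ 2 ≤ (‖x‖ * ‖a‖) ^ 2 := by
    rw [h1, h2]
    calc ‖star a * (⟪x, x⟫ * a)‖ ≤ ‖a‖ * (‖x‖ ^ 2 * ‖a‖) := h3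
    _ = (‖x‖ * ‖a‖) ^ 2 := by ring
  nlinarith [norm_nonneg (x <• a), mul_nonneg (norm_nonneg x) (norm_nonneg a)]

variable (φ : A →ₙₐ[ℂ] (X →L[ℂ] X)) (L : X → X → A)

/-- The generating set of `I_X`. -/
def SGen : Set A := {x : A | ∃ ξ η : X, x = L ξ η}

/-- The ideal `I_X`. -/
def IX : Set A := closure (Submodule.span ℂ (SGen L) : Set A)

lemma bm_L_zero (hsmul : ∀ (c : ℂ) (ξ η : X), L (c • ξ) η = c • L ξ η) (η : X) :
    L 0 η = 0 := by
  have := hsmul 0 0 η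
  simpa using this

lemma bm_star_L (h2 : ∀ ξ η : X, L ξ η = star (L η ξ)) (ξ η : X) :
    star (L ξ η) = L η ξ := (h2 η ξ).symm

lemma bm_mul_L (h1 : ∀ (a : A) (ξ η : X), L (φ a ξ) η = a * L ξ η) (a : A) (ξ η : X) :
    a * L ξ η = L (φ a ξ) η := (h1 a ξ η).symm

lemma bm_L_mul (h1 : ∀ (a : A) (ξ η : X), L (φ a ξ) η = a * L ξ η)
    (h2 : ∀ ξ η : X, L ξ η = star (L η ξ)) (a : A) (ξ η : X) :
    L ξ η * a = L ξ (φ (star a) η) := by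
  calc L ξ η * a = star (star a * star (L ξ η)) := by
        rw [star_mul, star_star, star_star]
  _ = star (star a * L η ξ) := by rw [bm_star_L L h2]
  _ = star (L (φ (star a) η) ξ) := by rw [h1]
  _ = L ξ (φ (star a) η) := (h2 _ _).symm

lemma norm_phiL_le (h4 : ∀ ξ η ζ : X, φ (L ξ η) ζ = ξ <• (inner A η ζ : A)) (ξ η : X) :
    ‖φ (L ξ η)‖ ≤ ‖ξ‖ * ‖η‖ := by
  refine ContinuousLinearMap.opNorm_le_bound _
    (mul_nonneg (norm_nonneg _) (norm_nonneg _)) fun ζ => ?_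
  rw [h4]
  calc ‖ξ <• ⟪η, ζ⟫‖ ≤ ‖ξ‖ * ‖⟪η, ζ⟫‖ := my_norm_op_smul_le _ _
  _ ≤ ‖ξ‖ * (‖η‖ * ‖ζ‖) := by
      gcongr
      exact RightCStarModule.norm_inner_le X
  _ = ‖ξ‖ * ‖η‖ * ‖ζ‖ := by ring

lemma SGen_star (h2 : ∀ ξ η : X, L ξ η = star (L η ξ)) {x : A} (hx : x ∈ SGen L) :
    star x ∈ SGen L := by
  obtain ⟨ξ, η, rfl⟩ := hx
  exact ⟨η, ξ, (bm_star_L L h2 ξ η)⟩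

lemma span_SGen_star (h2 : ∀ ξ η : X, L ξ η = star (L η ξ)) {x : A}
    (hx : x ∈ Submodule.span ℂ (SGen L)) :
    star x ∈ Submodule.span ℂ (SGen L) := by
  induction hx using Submodule.span_induction with
  | mem y hy => exact Submodule.subset_span (SGen_star L h2 hy)
  | zero => simpa using Submodule.zero_mem _
  | add y z _ _ hy hz => rw [star_add]; exact Submodule.add_mem _ hy hz
  | smul c y _ hy => rw [star_smul]; exact Submodule.smul_mem _ _ hy

lemma IX_star (h2 : ∀ ξ η : X, L ξ η = star (L η ξ)) {x : A} (hx : x ∈ IX L) :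
    star x ∈ IX L :=
  map_mem_closure continuous_star hx fun _ hy => span_SGen_star L h2 hy

lemma mul_left_mem_span (h1 : ∀ (a : A) (ξ η : X), L (φ a ξ) η = a * L ξ η) (a : A) {x : A}
    (hx : x ∈ Submodule.span ℂ (SGen L)) :
    a * x ∈ Submodule.span ℂ (SGen L) := by
  induction hx using Submodule.span_induction with
  | mem y hy =>
      obtain ⟨ξ, η, rfl⟩ := hy
      rw [bm_mul_L φ L h1]
      exact Submodule.subset_span ⟨_, _, rfl⟩
  | zero => rw [mul_zero]; exact Submodule.zero_mem _
  | add y z _ _ hy hz => rw [mul_add]; exact Submodule.add_mem _ hy hz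
  | smul c y _ hy => rw [mul_smul_comm]; exact Submodule.smul_mem _ _ hy

lemma mul_right_mem_span (h1 : ∀ (a : A) (ξ η : X), L (φ a ξ) η = a * L ξ η)
    (h2 : ∀ ξ η : X, L ξ η = star (L η ξ)) (a : A) {x : A}
    (hx : x ∈ Submodule.span ℂ (SGen L)) :
    x * a ∈ Submodule.span ℂ (SGen L) := by
  induction hx using Submodule.span_induction with
  | mem y hy =>
      obtain ⟨ξ, η, rfl⟩ := hy
      rw [bm_L_mul φ L h1 h2]
      exact Submodule.subset_span ⟨_, _, rfl⟩
  | zero => rw [zero_mul]; exact Submodule.zero_mem _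
  | add y z _ _ hy hz => rw [add_mul]; exact Submodule.add_mem _ hy hz
  | smul c y _ hy => rw [smul_mul_assoc]; exact Submodule.smul_mem _ _ hy

lemma mul_left_mem_IX (h1 : ∀ (a : A) (ξ η : X), L (φ a ξ) η = a * L ξ η) (a : A) {x : A}
    (hx : x ∈ IX L) : a * x ∈ IX L :=
  map_mem_closure (f := fun y => a * y) (continuous_mul_left a) hx
    fun _ hy => mul_left_mem_span φ L h1 a hy

lemma mul_right_mem_IX (h1 : ∀ (a : A) (ξ η : X), L (φ a ξ) η = a * L ξ η)
    (h2 : ∀ ξ η : X, L ξ η = star (L η ξ)) (a : A) {x : A}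
    (hx : x ∈ IX L) : x * a ∈ IX L :=
  map_mem_closure (f := fun y => y * a) (continuous_mul_right a) hx
    fun _ hy => mul_right_mem_span φ L h1 h2 a hy

lemma ker_mul_IX (hsmul : ∀ (c : ℂ) (ξ η : X), L (c • ξ) η = c • L ξ η)
    (h1 : ∀ (a : A) (ξ η : X), L (φ a ξ) η = a * L ξ η)
    {c : A} (hc : φ c = 0) {x : A} (hx : x ∈ IX L) : c * x = 0 := by
  have hs : (Submodule.span ℂ (SGen L) : Set A) ⊆ {y : A | c * y = 0} := by
    intro y hy
    induction hy using Submodule.span_induction with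
    | mem z hz =>
        obtain ⟨ξ, η, rfl⟩ := hz
        show c * L ξ η = 0
        rw [bm_mul_L φ L h1, hc]
        show L ((0 : X →L[ℂ] X) ξ) η = 0
        rw [ContinuousLinearMap.zero_apply, bm_L_zero L hsmul]
    | zero => show c * 0 = 0; rw [mul_zero]
    | add y z _ _ hy hz =>
        show c * (y + z) = 0
        rw [mul_add, hy, hz, add_zero]
    | smul r y _ hy =>
        show c * (r • y) = 0
        rw [mul_smul_comm, hy, smul_zero]
  have hclosed : IsClosed {y : A | c * y = 0} := by
    have : {y : A | c * y = 0} = (fun y => c * y) ⁻¹' {0} := rfl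
    rw [this]
    exact isClosed_singleton.preimage (continuous_mul_left c)
  exact closure_minimal hs hclosed hx

lemma IX_mul_ker (hsmul : ∀ (c : ℂ) (ξ η : X), L (c • ξ) η = c • L ξ η)
    (h1 : ∀ (a : A) (ξ η : X), L (φ a ξ) η = a * L ξ η)
    (h2 : ∀ ξ η : X, L ξ η = star (L η ξ))
    {x : A} (hx : x ∈ IX L) {c : A} (hc : φ c = 0) : x * c = 0 := by
  have h5 : φ (c * star c) = 0 := by rw [map_mul, hc, zero_mul]
  have h6 : (c * star c) * star x = 0 := ker_mul_IX φ L hsmul h1 h5 (IX_star L h2 hx)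
  have h7 : (x * c) * star (x * c) = 0 := by
    rw [star_mul]
    calc x * c * (star c * star x) = x * (c * star c * star x) := by
          simp only [mul_assoc]
    _ = 0 := by rw [h6, mul_zero]
  exact (CStarRing.mul_star_self_eq_zero_iff _).mp h7

lemma adj (h1 : ∀ (a : A) (ξ η : X), L (φ a ξ) η = a * L ξ η)
    (h2 : ∀ ξ η : X, L ξ η = star (L η ξ))
    (h4 : ∀ ξ η ζ : X, φ (L ξ η) ζ = ξ <• (inner A η ζ : A))
    (d : A) (ω γ : X) : ⟪φ (star d) ω, γ⟫ = ⟪ω, φ d γ⟫ := by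
  have key : ∀ ζ : X, ζ <• ⟪φ (star d) ω, γ⟫ = ζ <• ⟪ω, φ d γ⟫ := by
    intro ζ
    calc ζ <• ⟪φ (star d) ω, γ⟫ = φ (L ζ (φ (star d) ω)) γ := (h4 _ _ _).symm
    _ = φ (L ζ ω * d) γ := by rw [← bm_L_mul φ L h1 h2]
    _ = φ (L ζ ω) (φ d γ) := by rw [map_mul]; rfl
    _ = ζ <• ⟪ω, φ d γ⟫ := h4 _ _ _
  set u := ⟪φ (star d) ω, γ⟫ with hu
  set v := ⟪ω, φ d γ⟫ with hv
  have e1 : ∀ w : A, star (u - v) * w = ⟪γ, (φ (star d) ω) <• w⟫ - ⟪φ d γ, ω <• w⟫ := by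
    intro w
    rw [star_sub, sub_mul, hu, hv, RightCStarModule.star_inner, RightCStarModule.star_inner,
      RightCStarModule.inner_op_smul_right, RightCStarModule.inner_op_smul_right]
  have h7 : star (u - v) * (u - v) = 0 := by
    rw [mul_sub, e1 u, e1 v, key (φ (star d) ω), key ω, sub_self]
  exact sub_eq_zero.mp ((CStarRing.star_mul_self_eq_zero_iff _).mp h7)

lemma adj' (h1 : ∀ (a : A) (ξ η : X), L (φ a ξ) η = a * L ξ η)
    (h2 : ∀ ξ η : X, L ξ η = star (L η ξ))
    (h4 : ∀ ξ η ζ : X, φ (L ξ η) ζ = ξ <• (inner A η ζ : A))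
    (d : A) (hd : IsSelfAdjoint d) (ω γ : X) : ⟪φ d ω, γ⟫ = ⟪ω, φ d γ⟫ := by
  have := adj φ L h1 h2 h4 d ω γ
  rwa [hd.star_eq] at this

lemma inner_phi_nonneg (h1 : ∀ (a : A) (ξ η : X), L (φ a ξ) η = a * L ξ η)
    (h2 : ∀ ξ η : X, L ξ η = star (L η ξ))
    (h4 : ∀ ξ η ζ : X, φ (L ξ η) ζ = ξ <• (inner A η ζ : A))
    {z : A} (hz : 0 ≤ z) (ζ : X) : 0 ≤ ⟪ζ, φ z ζ⟫ := by
  obtain ⟨y, hy0, hyy⟩ : ∃ y : A, 0 ≤ y ∧ y * y = z :=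
    ⟨CFC.sqrt z, CFC.sqrt_nonneg z, CFC.sqrt_mul_sqrt_self z hz⟩
  have hstep : ⟪ζ, φ z ζ⟫ = ⟪φ y ζ, φ y ζ⟫ := by
    calc ⟪ζ, φ z ζ⟫ = ⟪ζ, φ y (φ y ζ)⟫ := by rw [← hyy, map_mul]; rfl
    _ = ⟪φ y ζ, φ y ζ⟫ := (adj' φ L h1 h2 h4 y hy0.isSelfAdjoint ζ (φ y ζ)).symm
  rw [hstep]
  exact RightCStarModule.inner_self_nonneg


lemma phi_contractive (h1 : ∀ (a : A) (ξ η : X), L (φ a ξ) η = a * L ξ η)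
    (h2 : ∀ ξ η : X, L ξ η = star (L η ξ))
    (h4 : ∀ ξ η ζ : X, φ (L ξ η) ζ = ξ <• (inner A η ζ : A))
    (d : A) : ‖φ d‖ ≤ ‖d‖ := by
  refine ContinuousLinearMap.opNorm_le_bound _ (norm_nonneg d) fun ζ => ?_
  set e := star d * d with he_def
  have he : 0 ≤ e := star_mul_self_nonneg d
  have hesa : IsSelfAdjoint e := he.isSelfAdjoint
  obtain ⟨s, hs0, hss⟩ : ∃ s : A, 0 ≤ s ∧ s * s = e :=
    ⟨CFC.sqrt e, CFC.sqrt_nonneg e, CFC.sqrt_mul_sqrt_self e he⟩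
  have hee : e * e ≤ ‖e‖ • e := by
    have h9 := CStarAlgebra.star_left_conjugate_le_norm_smul (a := s) (b := e) hesa
    rw [hs0.isSelfAdjoint.star_eq] at h9
    calc e * e = s * e * s := by rw [← hss]; simp only [mul_assoc]
    _ ≤ ‖e‖ • (s * s) := h9
    _ = ‖e‖ • e := by rw [hss]
  set w := ⟪ζ, φ e ζ⟫ with hw_def
  have hw : 0 ≤ w := inner_phi_nonneg φ L h1 h2 h4 he ζ
  have hwsa : star w = w := hw.isSelfAdjoint.star_eq
  have h10 : ⟪ζ, φ (e * e) ζ⟫ = ⟪φ e ζ, φ e ζ⟫ := by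
    rw [map_mul]
    exact (adj' φ L h1 h2 h4 e hesa ζ (φ e ζ)).symm
  have h11 : ⟪ζ, φ (e * e) ζ⟫ ≤ ‖e‖ • w := by
    have hz : 0 ≤ ((‖e‖ : ℂ)) • e - e * e := by
      rw [Complex.coe_smul]
      exact sub_nonneg.mpr hee
    have h12 := inner_phi_nonneg φ L h1 h2 h4 hz ζ
    rw [map_sub, map_smul, ContinuousLinearMap.sub_apply, ContinuousLinearMap.smul_apply,
      RightCStarModule.inner_sub_right, RightCStarModule.inner_smul_right_complex,
      Complex.coe_smul] at h12
    exact sub_nonneg.mp h12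
  have h13 : w * w ≤ (‖ζ‖ ^ 2) • ⟪φ e ζ, φ e ζ⟫ := by
    have h14 := RightCStarModule.inner_mul_inner_swap_le (A := A) (x := ζ) (y := φ e ζ)
    have h15 : ⟪φ e ζ, ζ⟫ = w := by
      rw [← RightCStarModule.star_inner, ← hw_def, hwsa]
    rwa [h15, ← hw_def] at h14
  have h0ww : 0 ≤ w * w := by
    have := star_mul_self_nonneg w
    rwa [hwsa] at this
  have hn1 : ‖w * w‖ = ‖w‖ * ‖w‖ := by
    have := CStarRing.norm_star_mul_self (x := w)
    rwa [hwsa] at this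
  have hn2 : ‖w * w‖ ≤ ‖ζ‖ ^ 2 * ‖⟪φ e ζ, φ e ζ⟫‖ := by
    calc ‖w * w‖ ≤ ‖(‖ζ‖ ^ 2) • ⟪φ e ζ, φ e ζ⟫‖ :=
          CStarAlgebra.norm_le_norm_of_nonneg_of_le h0ww h13
    _ = ‖ζ‖ ^ 2 * ‖⟪φ e ζ, φ e ζ⟫‖ := by
        rw [norm_smul, Real.norm_of_nonneg (by positivity)]
  have hn3 : ‖⟪φ e ζ, φ e ζ⟫‖ ≤ ‖e‖ * ‖w‖ := by
    calc ‖⟪φ e ζ, φ e ζ⟫‖ ≤ ‖‖e‖ • w‖ :=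
          CStarAlgebra.norm_le_norm_of_nonneg_of_le RightCStarModule.inner_self_nonneg
            (h10 ▸ h11)
    _ ≤ ‖e‖ * ‖w‖ := by
        rw [norm_smul, Real.norm_of_nonneg (norm_nonneg e)]
  have hwle : ‖w‖ ≤ ‖ζ‖ ^ 2 * ‖e‖ := by
    rcases (norm_nonneg w).eq_or_lt with h | h
    · rw [← h]; positivity
    · have : ‖w‖ * ‖w‖ ≤ (‖ζ‖ ^ 2 * ‖e‖) * ‖w‖ := by
        calc ‖w‖ * ‖w‖ = ‖w * w‖ := hn1.symm
        _ ≤ ‖ζ‖ ^ 2 * ‖⟪φ e ζ, φ e ζ⟫‖ := hn2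
        _ ≤ ‖ζ‖ ^ 2 * (‖e‖ * ‖w‖) := by gcongr
        _ = (‖ζ‖ ^ 2 * ‖e‖) * ‖w‖ := by ring
      exact le_of_mul_le_mul_right this h
  have hfinal : ‖φ d ζ‖ ^ 2 ≤ (‖d‖ * ‖ζ‖) ^ 2 := by
    have heq : ⟪φ d ζ, φ d ζ⟫ = w := by
      have h16 := adj φ L h1 h2 h4 (star d) ζ (φ d ζ)
      rw [star_star] at h16
      rw [h16, hw_def, he_def, map_mul]
      rfl
    calc ‖φ d ζ‖ ^ 2 = ‖⟪φ d ζ, φ d ζ⟫‖ := RightCStarModule.norm_sq_eq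
    _ = ‖w‖ := by rw [heq]
    _ ≤ ‖ζ‖ ^ 2 * ‖e‖ := hwle
    _ = ‖ζ‖ ^ 2 * (‖d‖ * ‖d‖) := by rw [he_def, CStarRing.norm_star_mul_self]
    _ = (‖d‖ * ‖ζ‖) ^ 2 := by ring
  nlinarith [norm_nonneg (φ d ζ), mul_nonneg (norm_nonneg d) (norm_nonneg ζ)]

lemma IX_sub_mem {x y : A} (hx : x ∈ IX L) (hy : y ∈ IX L) : x - y ∈ IX L := by
  have hcoe : IX L = ((Submodule.span ℂ (SGen L)).topologicalClosure : Set A) := by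
    rw [Submodule.topologicalClosure_coe]; rfl
  rw [hcoe] at hx hy ⊢
  exact sub_mem hx hy

lemma IX_inj (hsmul : ∀ (c : ℂ) (ξ η : X), L (c • ξ) η = c • L ξ η)
    (h1 : ∀ (a : A) (ξ η : X), L (φ a ξ) η = a * L ξ η)
    (h2 : ∀ ξ η : X, L ξ η = star (L η ξ))
    {x : A} (hx : x ∈ IX L) (hker : φ x = 0) : x = 0 := by
  have := ker_mul_IX φ L hsmul h1 hker (IX_star L h2 hx)
  exact (CStarRing.mul_star_self_eq_zero_iff _).mp this

lemma phi_tendsto (h1 : ∀ (a : A) (ξ η : X), L (φ a ξ) η = a * L ξ η)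
    (h2 : ∀ ξ η : X, L ξ η = star (L η ξ))
    (h4 : ∀ ξ η ζ : X, φ (L ξ η) ζ = ξ <• (inner A η ζ : A))
    {u : ℕ → A} {x : A} (hu : Filter.Tendsto u Filter.atTop (nhds x)) :
    Filter.Tendsto (fun n => φ (u n)) Filter.atTop (nhds (φ x)) := by
  rw [tendsto_iff_norm_sub_tendsto_zero]
  refine squeeze_zero (fun n => norm_nonneg _) (g := fun n => ‖u n - x‖) (fun n => ?_) ?_
  · rw [← map_sub]
    exact phi_contractive φ L h1 h2 h4 _
  · exact tendsto_iff_norm_sub_tendsto_zero.mp hu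

lemma L_bound (hadd : ∀ ξ₁ ξ₂ η : X, L (ξ₁ + ξ₂) η = L ξ₁ η + L ξ₂ η)
    (hsmul : ∀ (c : ℂ) (ξ η : X), L (c • ξ) η = c • L ξ η)
    (h1 : ∀ (a : A) (ξ η : X), L (φ a ξ) η = a * L ξ η)
    (h2 : ∀ ξ η : X, L ξ η = star (L η ξ))
    (h4 : ∀ ξ η ζ : X, φ (L ξ η) ζ = ξ <• (inner A η ζ : A))
    (η : X) : ∃ C : ℝ, 0 ≤ C ∧ ∀ α : X, ‖L α η‖ ≤ C * ‖α‖ := by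
  let T : X →ₗ[ℂ] A :=
    { toFun := fun α => L α η
      map_add' := fun a b => hadd a b η
      map_smul' := fun c a => hsmul c a η }
  have hTcont : Continuous T := by
    apply LinearMap.continuous_of_seq_closed_graph
    intro u x m hu hum
    have hmI : m ∈ IX L :=
      isClosed_closure.mem_of_tendsto hum <| Filter.Eventually.of_forall fun n =>
        subset_closure (Submodule.subset_span ⟨u n, η, rfl⟩)
    have hTxI : T x ∈ IX L := subset_closure (Submodule.subset_span ⟨x, η, rfl⟩)
    have t1 : Filter.Tendsto (fun n => φ (T (u n))) Filter.atTop (nhds (φ m)) :=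
      phi_tendsto φ L h1 h2 h4 hum
    have t2 : Filter.Tendsto (fun n => φ (T (u n))) Filter.atTop (nhds (φ (T x))) := by
      rw [tendsto_iff_norm_sub_tendsto_zero]
      refine squeeze_zero (fun n => norm_nonneg _)
        (g := fun n => ‖u n - x‖ * ‖η‖) (fun n => ?_) ?_
      · rw [← map_sub, ← map_sub]
        exact norm_phiL_le φ L h4 _ _
      · have := (tendsto_iff_norm_sub_tendsto_zero.mp hu).mul_const ‖η‖
        simpa using this
    have hphi : φ (m - T x) = 0 := by
      rw [map_sub, tendsto_nhds_unique t1 t2, sub_self]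
    have := IX_inj φ L hsmul h1 h2 (IX_sub_mem L hmI hTxI) hphi
    exact sub_eq_zero.mp this
  obtain ⟨C, hCpos, hC⟩ := SemilinearMapClass.bound_of_continuous T hTcont
  exact ⟨C, le_of_lt hCpos, hC⟩

lemma sa_span_norm_le (hadd : ∀ ξ₁ ξ₂ η : X, L (ξ₁ + ξ₂) η = L ξ₁ η + L ξ₂ η)
    (hsmul : ∀ (c : ℂ) (ξ η : X), L (c • ξ) η = c • L ξ η)
    (h1 : ∀ (a : A) (ξ η : X), L (φ a ξ) η = a * L ξ η)
    (h2 : ∀ ξ η : X, L ξ η = star (L η ξ))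
    (h4 : ∀ ξ η ζ : X, φ (L ξ η) ζ = ξ <• (inner A η ζ : A))
    {b : A} (hb : b ∈ Submodule.span ℂ (SGen L)) (hbsa : IsSelfAdjoint b) :
    ‖b‖ ≤ ‖φ b‖ := by
  obtain ⟨n, f, g, hsum⟩ := Submodule.mem_span_set'.mp hb
  -- extract ξ i, η i
  have hgen : ∀ i, ∃ p : X × X, (g i : A) = L p.1 p.2 := by
    intro i
    obtain ⟨ξ, η, hξη⟩ := (g i).2
    exact ⟨(ξ, η), hξη⟩
  choose p hp using hgen
  choose C hC0 hC using fun i => L_bound φ L hadd hsmul h1 h2 h4 (p i).2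
  set K : ℝ := ∑ i, ‖f i‖ * (C i * ‖(p i).1‖) with hK
  have hK0 : 0 ≤ K := Finset.sum_nonneg fun i _ =>
    mul_nonneg (norm_nonneg _) (mul_nonneg (hC0 i) (norm_nonneg _))
  -- powers
  let P : ℕ → A := fun k => Nat.rec b (fun _ q => q * b) k
  have hP0 : P 0 = b := rfl
  have hPsucc : ∀ k, P (k + 1) = P k * b := fun k => rfl
  have hPhi : ∀ k, ‖φ (P k)‖ ≤ ‖φ b‖ ^ (k + 1) := by
    intro k
    induction k with
    | zero => rw [hP0, pow_one]
    | succ k ih =>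
        rw [hPsucc, map_mul]
        calc ‖φ (P k) * φ b‖ ≤ ‖φ (P k)‖ * ‖φ b‖ := norm_mul_le _ _
        _ ≤ ‖φ b‖ ^ (k + 1) * ‖φ b‖ := mul_le_mul_of_nonneg_right ih (norm_nonneg _)
        _ = ‖φ b‖ ^ (k + 2) := by ring
  have hPnorm : ∀ k, ‖P (k + 1)‖ ≤ K * ‖φ b‖ ^ (k + 1) := by
    intro k
    have hexpand : P (k + 1) = ∑ i, f i • L (φ (P k) (p i).1) (p i).2 := by
      rw [hPsucc, ← hsum, Finset.mul_sum]
      refine Finset.sum_congr rfl fun i _ => ?_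
      rw [mul_smul_comm, hp i, bm_mul_L φ L h1]
    rw [hexpand]
    calc ‖∑ i, f i • L (φ (P k) (p i).1) (p i).2‖
        ≤ ∑ i, ‖f i • L (φ (P k) (p i).1) (p i).2‖ := norm_sum_le _ _
    _ ≤ ∑ i, ‖f i‖ * (C i * ‖(p i).1‖) * ‖φ b‖ ^ (k + 1) := by
        refine Finset.sum_le_sum fun i _ => ?_
        rw [norm_smul]
        have step1 : ‖φ (P k) (p i).1‖ ≤ ‖φ b‖ ^ (k + 1) * ‖(p i).1‖ := by
          calc ‖φ (P k) (p i).1‖ ≤ ‖φ (P k)‖ * ‖(p i).1‖ :=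
                ContinuousLinearMap.le_opNorm _ _
          _ ≤ ‖φ b‖ ^ (k + 1) * ‖(p i).1‖ :=
                mul_le_mul_of_nonneg_right (hPhi k) (norm_nonneg _)
        have step2 : ‖L (φ (P k) (p i).1) (p i).2‖ ≤ C i * (‖φ b‖ ^ (k + 1) * ‖(p i).1‖) :=
          (hC i _).trans (mul_le_mul_of_nonneg_left step1 (hC0 i))
        calc ‖f i‖ * ‖L (φ (P k) (p i).1) (p i).2‖
            ≤ ‖f i‖ * (C i * (‖φ b‖ ^ (k + 1) * ‖(p i).1‖)) :=
              mul_le_mul_of_nonneg_left step2 (norm_nonneg _)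
        _ = ‖f i‖ * (C i * ‖(p i).1‖) * ‖φ b‖ ^ (k + 1) := by ring
    _ = K * ‖φ b‖ ^ (k + 1) := by rw [hK, ← Finset.sum_mul]
  -- commutation / self-adjointness / doubling
  have hcomm : ∀ k, P k * b = b * P k := by
    intro k
    induction k with
    | zero => rfl
    | succ k ih => rw [hPsucc k, ← mul_assoc, ih, mul_assoc]
  have hPsa : ∀ k, star (P k) = P k := by
    intro k
    induction k with
    | zero => exact hbsa.star_eq
    | succ k ih =>
        rw [hPsucc k, star_mul, ih, hbsa.star_eq]
        exact (hcomm k).symm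
  have hPadd : ∀ m l, P m * P l = P (m + l + 1) := by
    intro m l
    induction l with
    | zero => exact (hPsucc m).symm
    | succ l ih =>
        have harith : m + (l + 1) + 1 = (m + l + 1) + 1 := by omega
        rw [harith, hPsucc (m + l + 1), hPsucc l, ← mul_assoc, ih]
  have hPnormsq : ∀ k, ‖P (2 * k + 1)‖ = ‖P k‖ ^ 2 := by
    intro k
    have : P k * P k = P (2 * k + 1) := by
      have h2k : 2 * k + 1 = k + k + 1 := by ring
      rw [h2k, ← hPadd]
    rw [← this]
    have h := CStarRing.norm_star_mul_self (x := P k)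
    rw [hPsa k] at h
    rw [h, sq]
  have hpow : ∀ j : ℕ, ‖b‖ ^ (2 ^ j) = ‖P (2 ^ j - 1)‖ := by
    intro j
    induction j with
    | zero => simp [hP0]
    | succ j ih =>
        have h2j : (1 : ℕ) ≤ 2 ^ j := Nat.one_le_two_pow
        have heq : 2 ^ (j + 1) - 1 = 2 * (2 ^ j - 1) + 1 := by omega
        rw [heq, hPnormsq, ← ih, ← pow_mul, pow_succ]
  -- conclusion
  by_contra hcon
  push_neg at hcon
  set M := ‖φ b‖ with hM
  set R := ‖b‖ with hR
  have hM0 : 0 ≤ M := norm_nonneg _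
  have hR0 : 0 < R := lt_of_le_of_lt hM0 hcon
  have hineq : ∀ j : ℕ, 1 ≤ j → R ^ (2 ^ j) ≤ K * M ^ (2 ^ j - 1) := by
    intro j hj
    have h2j : (1 : ℕ) ≤ 2 ^ j := Nat.one_le_two_pow
    have heq : 2 ^ j - 1 = (2 ^ j - 2) + 1 := by
      have : (2 : ℕ) ≤ 2 ^ j := by
        calc (2 : ℕ) = 2 ^ 1 := by norm_num
        _ ≤ 2 ^ j := Nat.pow_le_pow_right (by norm_num) hj
      omega
    rw [hpow j, heq]
    exact hPnorm _
  rcases eq_or_lt_of_le hM0 with hM0' | hM0'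
  · have h1 : R ^ 2 ≤ 0 := by simpa [← hM0'] using hineq 1 le_rfl
    nlinarith [hR0]
  · have hr1 : 1 < R / M := (one_lt_div hM0').mpr hcon
    obtain ⟨nn, hnn⟩ := pow_unbounded_of_one_lt (K / M) hr1
    have hineq2 : (R / M) ^ (2 ^ (nn + 1)) ≤ K / M := by
      have h1le : 1 ≤ nn + 1 := le_add_self.trans_eq rfl
      have := hineq (nn + 1) (by omega)
      have hMpow : (0:ℝ) < M ^ (2 ^ (nn + 1)) := pow_pos hM0' _
      rw [div_pow, div_le_div_iff₀ hMpow hM0']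
      calc R ^ 2 ^ (nn + 1) * M ≤ (K * M ^ (2 ^ (nn + 1) - 1)) * M :=
            mul_le_mul_of_nonneg_right this (le_of_lt hM0')
      _ = K * M ^ (2 ^ (nn + 1)) := by
          rw [mul_assoc, ← pow_succ]
          congr 2
          have : (1:ℕ) ≤ 2 ^ (nn + 1) := Nat.one_le_two_pow
          omega
    have hmono : (R / M) ^ nn ≤ (R / M) ^ (2 ^ (nn + 1)) := by
      apply pow_le_pow_right₀ (le_of_lt hr1)
      calc nn ≤ 2 ^ nn := Nat.le_of_lt (Nat.lt_two_pow_self (n := nn))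
      _ ≤ 2 ^ (nn + 1) := Nat.pow_le_pow_right (by norm_num) (by omega)
    linarith [hnn, hmono.trans hineq2]

lemma IX_norm_le (hadd : ∀ ξ₁ ξ₂ η : X, L (ξ₁ + ξ₂) η = L ξ₁ η + L ξ₂ η)
    (hsmul : ∀ (c : ℂ) (ξ η : X), L (c • ξ) η = c • L ξ η)
    (h1 : ∀ (a : A) (ξ η : X), L (φ a ξ) η = a * L ξ η)
    (h2 : ∀ ξ η : X, L ξ η = star (L η ξ))
    (h4 : ∀ ξ η ζ : X, φ (L ξ η) ζ = ξ <• (inner A η ζ : A))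
    {d : A} (hd : d ∈ IX L) : ‖d‖ ≤ ‖φ d‖ := by
  -- First, the self-adjoint case.
  have sa_case : ∀ c : A, c ∈ IX L → IsSelfAdjoint c → ‖c‖ ≤ ‖φ c‖ := by
    intro c hcI hcsa
    refine le_of_forall_pos_le_add fun ε hε => ?_
    obtain ⟨b₀, hb₀span, hb₀close⟩ := Metric.mem_closure_iff.mp hcI (ε / 2) (by linarith)
    rw [dist_eq_norm] at hb₀close
    set b : A := (1 / 2 : ℂ) • (b₀ + star b₀) with hb_def
    have hbspan : b ∈ Submodule.span ℂ (SGen L) :=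
      Submodule.smul_mem _ _ (Submodule.add_mem _ hb₀span (span_SGen_star L h2 hb₀span))
    have hbsa : IsSelfAdjoint b := by
      rw [hb_def, IsSelfAdjoint, star_smul, star_add, star_star, add_comm]
      norm_num
    have hcb : ‖c - b‖ < ε / 2 := by
      have hdecomp : c - b = (1 / 2 : ℂ) • ((c - b₀) + (c - star b₀)) := by
        rw [hb_def]
        module
      have hstar : c - star b₀ = star (c - b₀) := by
        rw [star_sub, hcsa.star_eq]
      calc ‖c - b‖ = ‖(1 / 2 : ℂ) • ((c - b₀) + (c - star b₀))‖ := by rw [hdecomp]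
      _ ≤ ‖(1 / 2 : ℂ)‖ * (‖c - b₀‖ + ‖c - star b₀‖) := by
          rw [norm_smul]
          gcongr
          exact norm_add_le _ _
      _ = (1 / 2) * (‖c - b₀‖ + ‖c - b₀‖) := by
          rw [hstar, norm_star]
          norm_num
      _ < ε / 2 := by linarith
    have hbb : ‖b‖ ≤ ‖φ b‖ := sa_span_norm_le φ L hadd hsmul h1 h2 h4 hbspan hbsa
    calc ‖c‖ ≤ ‖b‖ + ‖c - b‖ := by
          have h := norm_add_le b (c - b)
          rw [add_sub_cancel] at h
          exact h
    _ ≤ ‖φ b‖ + ε / 2 := by linarith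
    _ ≤ ‖φ c‖ + ‖φ (b - c)‖ + ε / 2 := by
        have := norm_add_le (φ c) (φ (b - c))
        rw [← map_add] at this
        simp only [add_sub_cancel] at this
        linarith
    _ ≤ ‖φ c‖ + ‖b - c‖ + ε / 2 := by
        have := phi_contractive φ L h1 h2 h4 (b - c)
        linarith
    _ ≤ ‖φ c‖ + ε := by
        rw [← norm_neg (b - c), neg_sub] at *
        linarith
  -- General case.
  rcases eq_or_ne d 0 with rfl | hd0
  · simp
  · have hdstar : star d ∈ IX L := IX_star L h2 hd
    have hcI : star d * d ∈ IX L := mul_right_mem_IX φ L h1 h2 d hdstar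
    have hcsa : IsSelfAdjoint (star d * d) := IsSelfAdjoint.star_mul_self d
    have key := sa_case _ hcI hcsa
    have hn : ‖star d * d‖ = ‖d‖ * ‖d‖ := CStarRing.norm_star_mul_self
    have hphin : ‖φ (star d * d)‖ ≤ ‖d‖ * ‖φ d‖ := by
      rw [map_mul]
      calc ‖φ (star d) * φ d‖ ≤ ‖φ (star d)‖ * ‖φ d‖ := norm_mul_le _ _
      _ ≤ ‖star d‖ * ‖φ d‖ :=
          mul_le_mul_of_nonneg_right (phi_contractive φ L h1 h2 h4 _) (norm_nonneg _)
      _ = ‖d‖ * ‖φ d‖ := by rw [norm_star]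
    have hdpos : 0 < ‖d‖ := norm_pos_iff.mpr hd0
    have : ‖d‖ * ‖d‖ ≤ ‖d‖ * ‖φ d‖ := by
      rw [← hn]
      exact key.trans hphin
    exact le_of_mul_le_mul_left this hdpos

lemma phi_surj_compact (hadd : ∀ ξ₁ ξ₂ η : X, L (ξ₁ + ξ₂) η = L ξ₁ η + L ξ₂ η)
    (hsmul : ∀ (c : ℂ) (ξ η : X), L (c • ξ) η = c • L ξ η)
    (h1 : ∀ (a : A) (ξ η : X), L (φ a ξ) η = a * L ξ η)
    (h2 : ∀ ξ η : X, L ξ η = star (L η ξ))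
    (h4 : ∀ ξ η ζ : X, φ (L ξ η) ζ = ξ <• (inner A η ζ : A))
    {T : X →L[ℂ] X} (hT : T ∈ compactOps A X) : ∃ b ∈ IX L, φ b = T := by
  have key : ∀ y ∈ (Submodule.span ℂ
      {T : X →L[ℂ] X | ∃ ξ η : X, ∀ ζ : X, T ζ = ξ <• (inner A η ζ : A)} :
        Set (X →L[ℂ] X)),
      ∃ b ∈ Submodule.span ℂ (SGen L), φ b = y := by
    intro y hy
    induction hy using Submodule.span_induction with
    | mem T' hT' =>
        obtain ⟨ξ, η, hθ⟩ := hT'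
        refine ⟨L ξ η, Submodule.subset_span ⟨ξ, η, rfl⟩, ?_⟩
        ext ζ
        rw [h4, hθ]
    | zero => exact ⟨0, Submodule.zero_mem _, map_zero φ⟩
    | add y z _ _ hy hz =>
        obtain ⟨b₁, hb₁, hfb₁⟩ := hy
        obtain ⟨b₂, hb₂, hfb₂⟩ := hz
        exact ⟨b₁ + b₂, Submodule.add_mem _ hb₁ hb₂, by rw [map_add, hfb₁, hfb₂]⟩
    | smul c y _ hy =>
        obtain ⟨b₁, hb₁, hfb₁⟩ := hy
        exact ⟨c • b₁, Submodule.smul_mem _ _ hb₁, by rw [map_smul, hfb₁]⟩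
  have hT' : T ∈ closure (Submodule.span ℂ
      {T : X →L[ℂ] X | ∃ ξ η : X, ∀ ζ : X, T ζ = ξ <• (inner A η ζ : A)} :
        Set (X →L[ℂ] X)) := hT
  obtain ⟨u, hu_mem, hu_lim⟩ := mem_closure_iff_seq_limit.mp hT'
  choose bb hbb hfbb using fun n => key (u n) (hu_mem n)
  have hCauchy : CauchySeq bb := by
    rw [Metric.cauchySeq_iff]
    have huC := hu_lim.cauchySeq
    rw [Metric.cauchySeq_iff] at huC
    intro ε hε
    obtain ⟨N, hN⟩ := huC ε hε
    refine ⟨N, fun m hm n hn => ?_⟩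
    have hsub : bb m - bb n ∈ IX L :=
      subset_closure (Submodule.sub_mem _ (hbb m) (hbb n))
    calc dist (bb m) (bb n) = ‖bb m - bb n‖ := dist_eq_norm _ _
    _ ≤ ‖φ (bb m - bb n)‖ := IX_norm_le φ L hadd hsmul h1 h2 h4 hsub
    _ = ‖u m - u n‖ := by rw [map_sub, hfbb, hfbb]
    _ = dist (u m) (u n) := (dist_eq_norm _ _).symm
    _ < ε := hN m hm n hn
  obtain ⟨l, hl⟩ := cauchySeq_tendsto_of_complete hCauchy
  have hlI : l ∈ IX L :=
    isClosed_closure.mem_of_tendsto hl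
      (Filter.Eventually.of_forall fun n => subset_closure (hbb n))
  refine ⟨l, hlI, ?_⟩
  have t1 := phi_tendsto φ L h1 h2 h4 hl
  have t2 : Filter.Tendsto (fun n => φ (bb n)) Filter.atTop (nhds T) := by
    have heq : (fun n => φ (bb n)) = u := funext hfbb
    rw [heq]
    exact hu_lim
  exact tendsto_nhds_unique t1 t2

end Aux

/-- Let `(X, φ, L)` be a Hilbert `A`-bimodule (here `L ξ η = ⟨⟨ξ, η⟩⟩` is the left inner
product).  Then `J_X = I_X`, where `J_X = φ⁻¹(K(X)) ∩ (ker φ)^⊥` and `I_X` is the closed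
linear span of `{⟨⟨ξ, η⟩⟩ : ξ, η ∈ X}`. -/
theorem bimodule_katsuraIdeal_eq_IX (φ : A →ₙₐ[ℂ] (X →L[ℂ] X))
    (hmod : ∀ (a : A) (ξ : X) (b : A), φ a (ξ <• b) = (φ a ξ) <• b)
    (L : X → X → A)
    (hadd : ∀ ξ₁ ξ₂ η : X, L (ξ₁ + ξ₂) η = L ξ₁ η + L ξ₂ η)
    (hsmul : ∀ (c : ℂ) (ξ η : X), L (c • ξ) η = c • L ξ η)
    (h1 : ∀ (a : A) (ξ η : X), L (φ a ξ) η = a * L ξ η)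
    (h2 : ∀ ξ η : X, L ξ η = star (L η ξ))
    (h3 : ∀ ξ : X, 0 ≤ L ξ ξ)
    (h4 : ∀ ξ η ζ : X, φ (L ξ η) ζ = ξ <• (inner A η ζ : A)) :
    KatsuraIdeal φ =
      closure (Submodule.span ℂ {x : A | ∃ ξ η : X, x = L ξ η} : Set A) := by
  have hIX : closure (Submodule.span ℂ {x : A | ∃ ξ η : X, x = L ξ η} : Set A) = IX L := rfl
  rw [hIX]
  apply Set.eq_of_subset_of_subset
  · rintro a ⟨haK, haperp⟩
    obtain ⟨b, hbI, hfb⟩ := phi_surj_compact φ L hadd hsmul h1 h2 h4 haK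
    have hx : φ (a - b) = 0 := by rw [map_sub, hfb, sub_self]
    have h5 : star b * (a - b) = 0 :=
      IX_mul_ker φ L hsmul h1 h2 (IX_star L h2 hbI) hx
    have hsx : star (a - b) * (a - b) = star a * (a - b) := by
      rw [star_sub, sub_mul, h5, sub_zero]
    have ht : φ (star a * (a - b)) = 0 := by rw [map_mul, hx, mul_zero]
    have hat : a * (star a * (a - b)) = 0 := haperp _ ht
    have ht0 : star a * (a - b) = 0 := by
      have hst : star (star a * (a - b)) * (star a * (a - b)) = 0 := by
        calc star (star a * (a - b)) * (star a * (a - b))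
            = (star (a - b) * a) * (star a * (a - b)) := by rw [star_mul, star_star]
        _ = star (a - b) * (a * (star a * (a - b))) := by simp only [mul_assoc]
        _ = 0 := by rw [hat, mul_zero]
      exact (CStarRing.star_mul_self_eq_zero_iff _).mp hst
    have hab : a - b = 0 := (CStarRing.star_mul_self_eq_zero_iff _).mp (hsx.trans ht0)
    rw [sub_eq_zero.mp hab]
    exact hbI
  · intro a haI
    refine ⟨?_, fun c hc => IX_mul_ker φ L hsmul h1 h2 haI hc⟩
    show φ a ∈ compactOps A X
    have hcont : Continuous fun y : A => φ y :=
      AddMonoidHomClass.continuous_of_bound φ 1 fun x => by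
        rw [one_mul]
        exact phi_contractive φ L h1 h2 h4 x
    show φ a ∈ closure (Submodule.span ℂ
      {T : X →L[ℂ] X | ∃ ξ η : X, ∀ ζ : X, T ζ = ξ <• (inner A η ζ : A)} :
        Set (X →L[ℂ] X))
    refine map_mem_closure hcont haI ?_
    intro y hy
    induction hy using Submodule.span_induction with
    | mem z hz =>
        obtain ⟨ξ, η, rfl⟩ := hz
        exact Submodule.subset_span ⟨ξ, η, fun ζ => h4 ξ η ζ⟩
    | zero => rw [map_zero]; exact Submodule.zero_mem _
    | add y z _ _ hy hz => rw [map_add]; exact Submodule.add_mem _ hy hz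
    | smul c y _ hy => rw [map_smul]; exact Submodule.smul_mem _ _ hy
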